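/- Let A be an m×n real matrix, let C > 1 be a real constant, and let 1 ≤ k ≤ n. Suppose that for every w ∈ ℝⁿ with Aw = 0 and every subset K ⊆ {1,…,n} with |K| = k one has C·‖w_K‖₁ ≤ ‖w_K̄‖₁. Then for every x ∈ ℝⁿ, every subset K with |K| = k, and every x̂ that is an ℓ1 minimizer for (A, x), one has ‖x − x̂‖₁ ≤ (2(C+1)/(C−1))·‖x_K̄‖₁. -/
import Mathlib


/-- The ℓ1 norm of a vector in ℝⁿ. -/
noncomputable def l1 {n : ℕ} (x : Fin n → ℝ) : ℝ := ∑ i, |x i|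

/-- The restriction of a vector to the coordinates in `K` (zero outside `K`). -/
def restr {n : ℕ} (K : Finset (Fin n)) (x : Fin n → ℝ) : Fin n → ℝ :=
  fun i => if i ∈ K then x i else 0

lemma l1_restr_eq {n : ℕ} (K : Finset (Fin n)) (x : Fin n → ℝ) :
    l1 (restr K x) = ∑ i ∈ K, |x i| := by
  simp [l1, restr, apply_ite abs, abs_zero, Finset.sum_ite_mem]

lemma l1_split {n : ℕ} (K : Finset (Fin n)) (x : Fin n → ℝ) :
    l1 x = l1 (restr K x) + l1 (restr Kᶜ x) := by
  rw [l1_restr_eq, l1_restr_eq]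
  exact (Finset.sum_add_sum_compl K _).symm

theorem stmt_0 {m n : ℕ} (A : Matrix (Fin m) (Fin n) ℝ) (C : ℝ) (hC : 1 < C)
    (k : ℕ) (hk1 : 1 ≤ k) (hkn : k ≤ n)
    (hnull : ∀ w : Fin n → ℝ, A.mulVec w = 0 →
      ∀ K : Finset (Fin n), K.card = k →
        C * l1 (restr K w) ≤ l1 (restr Kᶜ w)) :
    ∀ x : Fin n → ℝ, ∀ K : Finset (Fin n), K.card = k →
      ∀ xh : Fin n → ℝ, A.mulVec xh = A.mulVec x →
        (∀ z : Fin n → ℝ, A.mulVec z = A.mulVec x → l1 xh ≤ l1 z) →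
        l1 (x - xh) ≤ (2 * (C + 1) / (C - 1)) * l1 (restr Kᶜ x) := by
  intro x K hK xh hAx hmin
  set w : Fin n → ℝ := x - xh with hw
  have hw0 : A.mulVec w = 0 := by
    rw [hw, Matrix.mulVec_sub, hAx, sub_self]
  have hnsp := hnull w hw0 K hK
  have hle : l1 xh ≤ l1 x := hmin x rfl
  rw [l1_restr_eq] at hnsp ⊢
  rw [l1_restr_eq Kᶜ w] at hnsp
  have h1 : ∑ i ∈ K, |x i| ≤ (∑ i ∈ K, |w i|) + ∑ i ∈ K, |xh i| := by
    rw [← Finset.sum_add_distrib]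
    refine Finset.sum_le_sum fun i _ => ?_
    have : x i = w i + xh i := by simp [hw]
    rw [this]; exact abs_add_le _ _
  have h2 : ∑ i ∈ Kᶜ, |w i| ≤ (∑ i ∈ Kᶜ, |x i|) + ∑ i ∈ Kᶜ, |xh i| := by
    rw [← Finset.sum_add_distrib]
    refine Finset.sum_le_sum fun i _ => ?_
    have : w i = x i - xh i := by simp [hw]
    rw [this]; exact abs_sub _ _
  have hx : l1 x = (∑ i ∈ K, |x i|) + ∑ i ∈ Kᶜ, |x i| := by
    rw [l1_split K x, l1_restr_eq, l1_restr_eq]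
  have hxh : l1 xh = (∑ i ∈ K, |xh i|) + ∑ i ∈ Kᶜ, |xh i| := by
    rw [l1_split K xh, l1_restr_eq, l1_restr_eq]
  have hwsplit : l1 w = (∑ i ∈ K, |w i|) + ∑ i ∈ Kᶜ, |w i| := by
    rw [l1_split K w, l1_restr_eq, l1_restr_eq]
  rw [div_mul_eq_mul_div, le_div_iff₀ (by linarith : (0:ℝ) < C - 1)]
  nlinarith [hnsp, h1, h2, hx, hxh, hwsplit, hle]
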